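/- Let σ ∈ L^q([0,1]) be a spectral function with 1 < q < ∞ and conjugate exponent p. Then there exists a random variable Y with ‖Y‖_σ := ∫₀¹ σ(u) F_{|Y|}^{-1}(u) du < ∞ but E|Y|^p = ∞; that is, the inclusion L^p ⊆ L_σ is strict. -/

import Mathlib

open MeasureTheory ENNReal

/-- The (left-continuous) quantile function of X: F_X^{-1}(p) = inf{y : P(X ≤ y) ≥ p}. -/
noncomputable def quantile {Ω : Type*} [MeasurableSpace Ω] (μ : Measure Ω)
    (X : Ω → ℝ) (p : ℝ) : ℝ :=
  sInf {y : ℝ | p ≤ (μ {ω | X ω ≤ y}).toReal}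

/-- The σ-norm ‖Y‖_σ = ∫₀¹ σ(u)·F_{|Y|}^{-1}(u) du, valued in [0,∞]. -/
noncomputable def sigmaNorm {Ω : Type*} [MeasurableSpace Ω] (μ : Measure Ω)
    (σ : ℝ → ℝ) (Y : Ω → ℝ) : ℝ≥0∞ :=
  ∫⁻ u in Set.Ioo (0 : ℝ) 1, ENNReal.ofReal (σ u * quantile μ (fun ω => |Y ω|) u)

/-- The Average Value-at-Risk at level α. -/
noncomputable def avar {Ω : Type*} [MeasurableSpace Ω] (μ : Measure Ω)
    (X : Ω → ℝ) (α : ℝ) : ℝ :=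
  (1 - α)⁻¹ * ∫ u in α..1, quantile μ X u

/-- for a spectral function σ ∈ L^q, 1 < q < ∞, with conjugate exponent p,
there is Y with ‖Y‖_σ < ∞ but E|Y|^p = ∞ (on [0,1] with Lebesgue measure):
the inclusion L^p ⊆ L_σ is strict. -/
theorem stmt13 (σ : ℝ → ℝ) (hσ0 : ∀ u ∈ Set.Icc (0 : ℝ) 1, 0 ≤ σ u)
    (hσm : MonotoneOn σ (Set.Icc (0 : ℝ) 1)) (hσmeas : Measurable σ)
    (hσ1 : (∫ u in (0 : ℝ)..1, σ u) = 1)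
    (p q : ℝ) (hq : 1 < q) (hpq : 1 / p + 1 / q = 1)
    (hσq : MemLp σ (ENNReal.ofReal q) (volume.restrict (Set.Ioo (0 : ℝ) 1))) :
    ∃ Y : ℝ → ℝ, Measurable Y ∧
      sigmaNorm (volume.restrict (Set.Icc (0 : ℝ) 1)) σ Y < ⊤ ∧
      (∫⁻ ω in Set.Icc (0 : ℝ) 1, ENNReal.ofReal (|Y ω| ^ p)) = ⊤ := by
  -- exponent arithmetic
  have hq0 : (0:ℝ) < q := lt_trans one_pos hq
  have h1p : 1/p = 1 - 1/q := by linarith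
  have h1q_lt : 1/q < 1 := by rw [div_lt_one hq0]; exact hq
  have h1q_pos : 0 < 1/q := by positivity
  have hp_pos : (0:ℝ) < p := by
    have h : 0 < 1/p := by rw [h1p]; linarith
    exact one_div_pos.mp h
  have hp1 : (1:ℝ) < p := by
    have h : 1/p < 1 := by rw [h1p]; linarith
    exact (div_lt_one hp_pos).mp h
  have hqp : (q - 1) * p = q := by
    have hpne : p ≠ 0 := ne_of_gt hp_pos
    have hqne : q ≠ 0 := ne_of_gt hq0
    field_simp at h1p
    nlinarith [h1p]
  -- the density f = |σ|^q restricted to [0,1]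
  set f : ℝ → ℝ := (Set.Icc (0:ℝ) 1).indicator (fun t => |σ t| ^ q) with hfdef
  have hfmeas : Measurable f :=
    ((Real.continuous_rpow_const hq0.le).measurable.comp hσmeas.abs).indicator measurableSet_Icc
  have hf0 : ∀ x, 0 ≤ f x := by
    intro x
    unfold f
    apply Set.indicator_nonneg
    intro t _
    exact Real.rpow_nonneg (abs_nonneg _) _
  have hfIcc : ∀ t ∈ Set.Icc (0:ℝ) 1, f t = σ t ^ q := by
    intro t ht
    unfold f
    rw [Set.indicator_of_mem ht, abs_of_nonneg (hσ0 t ht)]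
  have hfint : Integrable f := by
    have h1 : IntegrableOn (fun t => |σ t| ^ q) (Set.Ioo (0:ℝ) 1) volume := by
      have h := hσq.integrable_norm_rpow (by simp [ENNReal.ofReal_eq_zero]; linarith) ofReal_ne_top
      simpa [IntegrableOn, ENNReal.toReal_ofReal hq0.le, Real.norm_eq_abs] using h
    have h2 : IntegrableOn (fun t => |σ t| ^ q) (Set.Icc (0:ℝ) 1) volume := by
      rw [IntegrableOn, ← restrict_Ioo_eq_restrict_Icc]
      exact h1
    exact h2.integrable_indicator measurableSet_Icc
  -- the primitive Φ
  set Φ : ℝ → ℝ := fun u => ∫ t in (0:ℝ)..u, f t with hΦdef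
  have hΦcont : Continuous Φ := hfint.continuous_primitive 0
  have hΦdiff : ∀ a b : ℝ, Φ b - Φ a = ∫ t in a..b, f t := by
    intro a b
    have := intervalIntegral.integral_add_adjacent_intervals
      (hfint.intervalIntegrable (a := 0) (b := a)) (hfint.intervalIntegrable (a := a) (b := b))
    unfold Φ
    linarith [this]
  have hΦmono : Monotone Φ := by
    intro u v huv
    have h := hΦdiff u v
    have h2 : 0 ≤ ∫ t in u..v, f t :=
      intervalIntegral.integral_nonneg huv (fun x _ => hf0 x)
    linarith
  have hΦ0 : Φ 0 = 0 := intervalIntegral.integral_same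
  set M : ℝ := Φ 1 with hMdef
  -- the block lintegral identity
  have hblock : ∀ a b : ℝ, a ≤ b →
      (∫⁻ u in Set.Ioo a b, ENNReal.ofReal (f u)) = ENNReal.ofReal (Φ b - Φ a) := by
    intro a b hab
    rw [restrict_Ioo_eq_restrict_Ioc, hΦdiff a b, intervalIntegral.integral_of_le hab,
      ofReal_integral_eq_lintegral_ofReal hfint.integrableOn
        (Filter.Eventually.of_forall (fun x => hf0 x))]
  -- a.e. zero extraction: if Φ u = M for u < 1, contradiction
  have hσzero : ∀ u, 0 < u → u < 1 → Φ u = M → False := by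
    intro u hu0 hu1 hΦu
    have hint0 : ∫ t in Set.Ioc u 1, f t = 0 := by
      have h := hΦdiff u 1
      rw [intervalIntegral.integral_of_le hu1.le] at h
      rw [← h, ← hMdef, hΦu, sub_self]
    have hae0 : ∀ᵐ t, t ∈ Set.Ioc u 1 → f t = 0 := by
      have h := (integral_eq_zero_iff_of_nonneg (fun x => hf0 x) hfint.integrableOn).mp hint0
      have h2 : ∀ᵐ x ∂(volume.restrict (Set.Ioc u 1)), f x = 0 := by
        filter_upwards [h] with x hx using hx
      exact (ae_restrict_iff' measurableSet_Ioc).mp h2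
    obtain ⟨t, htIoo, htf⟩ : ∃ t, t ∈ Set.Ioo u 1 ∧ f t = 0 := by
      by_contra hc
      push_neg at hc
      have hsub : Set.Ioo u 1 ⊆ {x | ¬(x ∈ Set.Ioc u 1 → f x = 0)} := by
        intro x hx
        simp only [Set.mem_setOf_eq]
        intro himp
        exact hc x hx (himp ⟨hx.1, hx.2.le⟩)
      have hN : volume {x | ¬(x ∈ Set.Ioc u 1 → f x = 0)} = 0 := ae_iff.mp hae0
      have := measure_mono (μ := volume) hsub
      rw [hN, Real.volume_Ioo] at this
      simp only [nonpos_iff_eq_zero, ENNReal.ofReal_eq_zero] at this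
      linarith
    have htIcc : t ∈ Set.Icc (0:ℝ) 1 := ⟨le_of_lt (lt_trans hu0 htIoo.1), htIoo.2.le⟩
    have hσt : σ t = 0 := by
      rw [hfdef, Set.indicator_of_mem htIcc] at htf
      have := (Real.rpow_eq_zero_iff_of_nonneg (abs_nonneg (σ t))).mp htf
      exact abs_eq_zero.mp this.1
    have hae2 : ∀ᵐ s, s ∈ Set.Ioc (0:ℝ) 1 → σ s = 0 := by
      filter_upwards [hae0] with s hs hs01
      have hsIcc : s ∈ Set.Icc (0:ℝ) 1 := ⟨hs01.1.le, hs01.2⟩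
      rcases le_or_gt s t with h | h
      · have h1 : σ s ≤ σ t := hσm hsIcc htIcc h
        have h2 : 0 ≤ σ s := hσ0 s hsIcc
        linarith [hσt]
      · have hfs : f s = 0 := hs ⟨lt_trans htIoo.1 h, hs01.2⟩
        rw [hfdef, Set.indicator_of_mem hsIcc] at hfs
        have := (Real.rpow_eq_zero_iff_of_nonneg (abs_nonneg (σ s))).mp hfs
        exact abs_eq_zero.mp this.1
    have hzero : (∫ s in (0:ℝ)..1, σ s) = 0 := by
      rw [intervalIntegral.integral_of_le (by norm_num : (0:ℝ) ≤ 1)]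
      apply integral_eq_zero_of_ae
      have h5 : ∀ᵐ x ∂(volume.restrict (Set.Ioc (0:ℝ) 1)), σ x = 0 :=
        (ae_restrict_iff' measurableSet_Ioc).mpr
          (by filter_upwards [hae2] with s hs hs01 using hs hs01)
      filter_upwards [h5] with x hx using hx
    rw [hσ1] at hzero
    norm_num at hzero
  have hΦneg : ∀ u, u ≤ 0 → Φ u = 0 := by
    intro u h
    have h2 := hΦdiff u 0
    have h3 : (∫ t in u..(0:ℝ), f t) = 0 := by
      rw [intervalIntegral.integral_of_le h, ← restrict_Ioo_eq_restrict_Ioc]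
      apply integral_eq_zero_of_ae
      have h5 : ∀ᵐ x ∂(volume.restrict (Set.Ioo u (0:ℝ))), f x = 0 := by
        refine (ae_restrict_iff' measurableSet_Ioo).mpr
          (Filter.Eventually.of_forall (fun t ht => ?_))
        rw [hfdef]
        exact Set.indicator_of_notMem (fun hmem => absurd hmem.1 (not_le.mpr ht.2)) _
      filter_upwards [h5] with x hx using hx
    rw [hΦ0] at h2; linarith
  have hΦnonneg : ∀ u, 0 ≤ Φ u := by
    intro u
    rcases le_or_gt 0 u with h | h
    · rw [← hΦ0]; exact hΦmono h
    · rw [hΦneg u h.le]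
  have hM0 : 0 < M := by
    rcases lt_or_eq_of_le (hΦnonneg 1) with h | h
    · exact h
    · exfalso
      apply hσzero (1/2) (by norm_num) (by norm_num)
      have h1 : Φ (1/2) ≤ M := hΦmono (by norm_num)
      have h2 : 0 ≤ Φ (1/2) := hΦnonneg _
      rw [← hMdef] at h
      linarith
  have hΦltM : ∀ u, u < 1 → Φ u < M := by
    intro u hu
    rcases le_or_gt u 0 with h | h
    · calc Φ u ≤ Φ 0 := hΦmono h
        _ = 0 := hΦ0
        _ < M := hM0
    · rcases lt_or_eq_of_le (hΦmono hu.le : Φ u ≤ M) with h2 | h2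
      · exact h2
      · exact absurd h2 (fun h2 => hσzero u h hu h2)
  -- levels and block endpoints
  set lo : ℕ → ℝ := fun n => M * (1 - (1/2:ℝ)^n) with hlodef
  have hlo_nonneg : ∀ n, 0 ≤ lo n := by
    intro n
    have : (1/2:ℝ)^n ≤ 1 := pow_le_one₀ (by norm_num) (by norm_num)
    unfold lo; nlinarith
  have hlo_lt : ∀ n, lo n < M := by
    intro n
    have : (0:ℝ) < (1/2:ℝ)^n := by positivity
    unfold lo; nlinarith
  have hlo_mono : Monotone lo := by
    intro n m hnm
    have : (1/2:ℝ)^m ≤ (1/2:ℝ)^n := pow_le_pow_of_le_one (by norm_num) (by norm_num) hnm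
    unfold lo; nlinarith
  set S : ℕ → Set ℝ := fun n => {u | u ∈ Set.Icc (0:ℝ) 1 ∧ lo n ≤ Φ u} with hSdef
  have hSne : ∀ n, (S n).Nonempty := fun n =>
    ⟨1, ⟨by norm_num, by norm_num⟩, (hlo_lt n).le⟩
  have hSbdd : ∀ n, BddBelow (S n) := fun n => ⟨0, fun x hx => hx.1.1⟩
  have hSclosed : ∀ n, IsClosed (S n) := by
    intro n
    have : S n = Set.Icc (0:ℝ) 1 ∩ Φ ⁻¹' (Set.Ici (lo n)) := rfl
    rw [this]
    exact isClosed_Icc.inter (isClosed_Ici.preimage hΦcont)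
  set a : ℕ → ℝ := fun n => sInf (S n) with hadef
  have haS : ∀ n, a n ∈ S n := fun n => (hSclosed n).csInf_mem (hSne n) (hSbdd n)
  have ha01 : ∀ n, a n ∈ Set.Icc (0:ℝ) 1 := fun n => (haS n).1
  have ha_le : ∀ u ∈ Set.Icc (0:ℝ) 1, ∀ n, lo n ≤ Φ u → a n ≤ u :=
    fun u hu n h => csInf_le (hSbdd n) ⟨hu, h⟩
  have haΦ : ∀ n, Φ (a n) = lo n := by
    intro n
    have hge : lo n ≤ Φ (a n) := (haS n).2
    rcases eq_or_lt_of_le hge with h | h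
    · exact h.symm
    · exfalso
      rcases eq_or_lt_of_le (ha01 n).1 with h0 | h0
      · rw [← h0, hΦ0] at h
        exact absurd h (not_lt.mpr (hlo_nonneg n))
      · have hU : IsOpen (Φ ⁻¹' Set.Ioi (lo n)) := isOpen_Ioi.preimage hΦcont
        rcases Metric.isOpen_iff.mp hU (a n) h with ⟨ε, hε, hball⟩
        set v := max 0 (a n - ε/2) with hv
        have hva : v < a n := max_lt h0 (by linarith)
        have hv0 : 0 ≤ v := le_max_left _ _
        have hdist : dist v (a n) < ε := by
          rw [Real.dist_eq, abs_of_nonpos (by linarith)]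
          have h6 : a n - ε/2 ≤ v := le_max_right _ _
          linarith
        have hvU : lo n < Φ v := hball hdist
        have h7 : a n ≤ v := ha_le v ⟨hv0, le_trans hva.le (ha01 n).2⟩ n hvU.le
        linarith
  have hamono : Monotone a := by
    intro n m hnm
    exact csInf_le_csInf (hSbdd n) (hSne m) (fun x hx => ⟨hx.1, le_trans (hlo_mono hnm) hx.2⟩)
  -- the random variable Y
  set g : ℝ → ℝ := fun x => (((1 - x / M) ^ (1/p : ℝ)))⁻¹ with hgdef
  set Y : ℝ → ℝ := fun u => |σ u| ^ (q - 1) * g (Φ u) with hYdef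
  have hYmeas : Measurable Y := by
    apply Measurable.mul
    · exact (Real.continuous_rpow_const (by linarith)).measurable.comp hσmeas.abs
    · exact (((continuous_const.sub (hΦcont.div_const M)).rpow_const
        (fun x => Or.inr (by positivity))).measurable).inv
  have hbase_nonneg : ∀ u, u ≤ 1 → 0 ≤ 1 - Φ u / M := by
    intro u hu
    have : Φ u ≤ M := hΦmono hu
    have := (div_le_one hM0).mpr this
    linarith
  have hbase_pos : ∀ u, u < 1 → 0 < 1 - Φ u / M := by
    intro u hu
    have : Φ u < M := hΦltM u hu
    have := (div_lt_one hM0).mpr this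
    linarith
  have hY_nonneg : ∀ u, u ≤ 1 → 0 ≤ Y u := by
    intro u hu
    apply mul_nonneg (Real.rpow_nonneg (abs_nonneg _) _)
    exact inv_nonneg.mpr (Real.rpow_nonneg (hbase_nonneg u hu) _)
  have hYmono : ∀ t u : ℝ, 0 ≤ t → t ≤ u → u < 1 → Y t ≤ Y u := by
    intro t u ht htu hu
    have htIcc : t ∈ Set.Icc (0:ℝ) 1 := ⟨ht, le_of_lt (lt_of_le_of_lt htu hu)⟩
    have huIcc : u ∈ Set.Icc (0:ℝ) 1 := ⟨le_trans ht htu, hu.le⟩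
    have h1 : |σ t| ^ (q-1) ≤ |σ u| ^ (q-1) := by
      rw [abs_of_nonneg (hσ0 t htIcc), abs_of_nonneg (hσ0 u huIcc)]
      exact Real.rpow_le_rpow (hσ0 t htIcc) (hσm htIcc huIcc htu) (by linarith)
    have h2 : g (Φ t) ≤ g (Φ u) := by
      have hbu : 0 < 1 - Φ u / M := hbase_pos u hu
      have hbt : 1 - Φ u / M ≤ 1 - Φ t / M := by
        have h := hΦmono htu
        have h5 : Φ t / M ≤ Φ u / M := by gcongr
        linarith
      have h3 : (1 - Φ u / M) ^ (1/p:ℝ) ≤ (1 - Φ t / M) ^ (1/p:ℝ) :=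
        Real.rpow_le_rpow hbu.le hbt (by positivity)
      have h4 : 0 < (1 - Φ u / M) ^ (1/p:ℝ) := Real.rpow_pos_of_pos hbu _
      exact inv_anti₀ h4 h3
    have hg_nonneg : 0 ≤ g (Φ t) :=
      inv_nonneg.mpr (Real.rpow_nonneg (hbase_nonneg t htIcc.2) _)
    exact mul_le_mul h1 h2 hg_nonneg (Real.rpow_nonneg (abs_nonneg _) _)
  
  -- measurability pieces
  have hgΦmeas : Measurable fun u => g (Φ u) :=
    (((continuous_const.sub (hΦcont.div_const M)).rpow_const
      (fun x => Or.inr (by positivity))).measurable).inv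
  -- quantile bound
  have hquant : ∀ u ∈ Set.Ioo (0:ℝ) 1,
      quantile (volume.restrict (Set.Icc 0 1)) (fun ω => |Y ω|) u ≤ Y u := by
    intro u hu
    unfold quantile
    apply csInf_le
    · refine ⟨0, fun y hy => ?_⟩
      by_contra hy0
      push_neg at hy0
      have hempty : {ω : ℝ | |Y ω| ≤ y} = ∅ := by
        ext ω
        simp only [Set.mem_setOf_eq, Set.mem_empty_iff_false, iff_false, not_le]
        exact lt_of_lt_of_le hy0 (abs_nonneg _)
      rw [Set.mem_setOf_eq, hempty] at hy
      simp only [measure_empty, ENNReal.toReal_zero] at hy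
      linarith [hu.1]
    · show u ≤ _
      have hms : MeasurableSet {ω : ℝ | |Y ω| ≤ Y u} :=
        measurableSet_le hYmeas.abs measurable_const
      rw [Measure.restrict_apply hms]
      have hsub : Set.Icc 0 u ⊆ {ω : ℝ | |Y ω| ≤ Y u} ∩ Set.Icc 0 1 := by
        intro t ht
        refine ⟨?_, ht.1, le_trans ht.2 hu.2.le⟩
        rw [Set.mem_setOf_eq, abs_of_nonneg (hY_nonneg t (le_trans ht.2 hu.2.le))]
        exact hYmono t u ht.1 ht.2 hu.2
      have hmono := measure_mono (μ := volume) hsub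
      rw [Real.volume_Icc, sub_zero] at hmono
      have hne : volume ({ω : ℝ | |Y ω| ≤ Y u} ∩ Set.Icc 0 1) ≠ ⊤ :=
        ne_top_of_le_ne_top (by rw [Real.volume_Icc]; exact ofReal_ne_top)
          (measure_mono Set.inter_subset_right)
      exact (ENNReal.ofReal_le_iff_le_toReal hne).mp hmono
  -- the cover
  have hcover : Set.Ioo (0:ℝ) 1 ⊆ ⋃ n, Set.Ico (a n) (a (n+1)) := by
    intro u hu
    have hΦu : Φ u < M := hΦltM u hu.2
    have hex : ∃ n, Φ u < lo n := by
      obtain ⟨n, hn⟩ := exists_pow_lt_of_lt_one (x := (M - Φ u)/M)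
        (div_pos (by linarith) hM0) (by norm_num : (1/2:ℝ) < 1)
      refine ⟨n, ?_⟩
      have h8 : M * (1/2:ℝ)^n < M - Φ u := by
        calc M * (1/2:ℝ)^n < M * ((M - Φ u)/M) := by
              exact mul_lt_mul_of_pos_left hn hM0
          _ = M - Φ u := by field_simp
      show Φ u < M * (1 - (1/2:ℝ)^n)
      nlinarith
    have hspec : Φ u < lo (Nat.find hex) := Nat.find_spec hex
    have hn0pos : Nat.find hex ≠ 0 := by
      intro h
      rw [h] at hspec
      have h9 : lo 0 = 0 := by show M * (1 - (1/2:ℝ)^(0:ℕ)) = 0; simp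
      rw [h9] at hspec
      exact absurd hspec (not_lt.mpr (hΦnonneg u))
    obtain ⟨n, hn⟩ := Nat.exists_eq_succ_of_ne_zero hn0pos
    refine Set.mem_iUnion.mpr ⟨n, ?_, ?_⟩
    · have hmin : ¬ Φ u < lo n := Nat.find_min hex (by omega)
      exact ha_le u ⟨hu.1.le, hu.2.le⟩ n (not_lt.mp hmin)
    · by_contra hc
      push_neg at hc
      have h10 : lo (n+1) ≤ Φ u := by rw [← haΦ (n+1)]; exact hΦmono hc
      rw [hn, Nat.succ_eq_add_one] at hspec
      linarith
  -- block measure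
  have hΦa_diff : ∀ n : ℕ, Φ (a (n+1)) - Φ (a n) = M * (1/2:ℝ)^(n+1) := by
    intro n
    rw [haΦ, haΦ]
    show M * (1 - (1/2:ℝ)^(n+1)) - M * (1 - (1/2:ℝ)^n) = M * (1/2:ℝ)^(n+1)
    rw [pow_succ]
    ring
  -- geometric ratio
  set sr : ℝ := (1/2:ℝ) ^ (1/q : ℝ) with hsrdef
  have hsr_pos : 0 < sr := Real.rpow_pos_of_pos (by norm_num) _
  have hsr_lt1 : sr < 1 := Real.rpow_lt_one (by norm_num) (by norm_num) h1q_pos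
  -- pointwise identity σ·Y = f·g∘Φ on (0,1)
  have hYu_eq : ∀ u ∈ Set.Ioo (0:ℝ) 1, σ u * Y u = f u * g (Φ u) := by
    intro u hu
    have huIcc : u ∈ Set.Icc (0:ℝ) 1 := ⟨hu.1.le, hu.2.le⟩
    show σ u * (|σ u| ^ (q-1) * g (Φ u)) = f u * g (Φ u)
    rw [abs_of_nonneg (hσ0 u huIcc), hfIcc u huIcc]
    rcases eq_or_lt_of_le (hσ0 u huIcc) with h0 | h0
    · rw [← h0, Real.zero_rpow (ne_of_gt hq0), Real.zero_rpow (by intro h; rw [sub_eq_zero] at h; exact hq.ne' h)]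
      ring
    · calc σ u * (σ u ^ (q-1) * g (Φ u)) = (σ u ^ (1:ℝ) * σ u ^ (q-1)) * g (Φ u) := by
            rw [Real.rpow_one]; ring
        _ = σ u ^ q * g (Φ u) := by rw [← Real.rpow_add h0]; norm_num
  -- upper bound on g on each block
  have hgle : ∀ n : ℕ, ∀ u ∈ Set.Ico (a n) (a (n+1)),
      g (Φ u) ≤ (((1/2:ℝ)^(n+1)) ^ (1/p:ℝ))⁻¹ := by
    intro n u hu
    have hb : (1/2:ℝ)^(n+1) ≤ 1 - Φ u / M := by
      have h1 : Φ u ≤ Φ (a (n+1)) := hΦmono hu.2.le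
      rw [haΦ (n+1)] at h1
      have h1' : Φ u ≤ M * (1 - (1/2:ℝ)^(n+1)) := h1
      have h2 : Φ u / M ≤ 1 - (1/2:ℝ)^(n+1) := (div_le_iff₀ hM0).mpr (by linarith)
      linarith
    exact inv_anti₀ (Real.rpow_pos_of_pos (by positivity) _)
      (Real.rpow_le_rpow (by positivity) hb (by positivity))
  -- key real identity
  have hkey : ∀ n : ℕ, (((1/2:ℝ)^(n+1)) ^ (1/p:ℝ))⁻¹ * (M * (1/2:ℝ)^(n+1)) = M * sr^(n+1) := by
    intro n
    have hx : (0:ℝ) < (1/2:ℝ)^(n+1) := by positivity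
    have h1 : ((1/2:ℝ)^(n+1) : ℝ) ^ (1/q:ℝ) = sr ^ (n+1) := by
      rw [hsrdef, ← Real.rpow_natCast ((1/2:ℝ) ^ (1/q:ℝ)) (n+1),
        ← Real.rpow_natCast (1/2:ℝ) (n+1), ← Real.rpow_mul (by norm_num),
        ← Real.rpow_mul (by norm_num), mul_comm]
    have h2 : ((1/2:ℝ)^(n+1)) ^ (1/q:ℝ)
        = (1/2:ℝ)^(n+1) * ((((1/2:ℝ)^(n+1)) ^ (1/p:ℝ))⁻¹) := by
      have h3 : (1/q:ℝ) = 1 + (-(1/p)) := by rw [h1p]; ring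
      rw [h3, Real.rpow_add hx, Real.rpow_one, Real.rpow_neg hx.le]
    calc (((1/2:ℝ)^(n+1))^(1/p:ℝ))⁻¹ * (M * (1/2:ℝ)^(n+1))
        = M * ((1/2:ℝ)^(n+1) * ((((1/2:ℝ)^(n+1))^(1/p:ℝ))⁻¹)) := by ring
      _ = M * (((1/2:ℝ)^(n+1)) ^ (1/q:ℝ)) := by rw [← h2]
      _ = M * sr^(n+1) := by rw [h1]
  -- block lintegral upper bound
  have hblockT : ∀ n : ℕ, (∫⁻ u in Set.Ico (a n) (a (n+1)), ENNReal.ofReal (f u * g (Φ u)))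
      ≤ ENNReal.ofReal (M * sr^(n+1)) := by
    intro n
    have hc_nonneg : 0 ≤ (((1/2:ℝ)^(n+1)) ^ (1/p:ℝ))⁻¹ := by positivity
    calc (∫⁻ u in Set.Ico (a n) (a (n+1)), ENNReal.ofReal (f u * g (Φ u)))
        ≤ ∫⁻ u in Set.Ico (a n) (a (n+1)),
            ENNReal.ofReal ((((1/2:ℝ)^(n+1)) ^ (1/p:ℝ))⁻¹) * ENNReal.ofReal (f u) := by
          apply setLIntegral_mono (Measurable.const_mul hfmeas.ennreal_ofReal _)
          intro u hu
          rw [← ENNReal.ofReal_mul hc_nonneg]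
          apply ENNReal.ofReal_le_ofReal
          rw [mul_comm ((((1/2:ℝ)^(n+1)) ^ (1/p:ℝ))⁻¹)]
          exact mul_le_mul_of_nonneg_left (hgle n u hu) (hf0 u)
      _ = ENNReal.ofReal ((((1/2:ℝ)^(n+1)) ^ (1/p:ℝ))⁻¹)
            * ∫⁻ u in Set.Ico (a n) (a (n+1)), ENNReal.ofReal (f u) :=
          lintegral_const_mul' _ _ ofReal_ne_top
      _ = ENNReal.ofReal ((((1/2:ℝ)^(n+1)) ^ (1/p:ℝ))⁻¹) * ENNReal.ofReal (M * (1/2:ℝ)^(n+1)) := by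
          rw [← restrict_Ioo_eq_restrict_Ico, hblock _ _ (hamono n.le_succ), hΦa_diff n]
      _ = ENNReal.ofReal ((((1/2:ℝ)^(n+1)) ^ (1/p:ℝ))⁻¹ * (M * (1/2:ℝ)^(n+1))) :=
          (ENNReal.ofReal_mul hc_nonneg).symm
      _ = ENNReal.ofReal (M * sr^(n+1)) := by rw [hkey n]
  -- geometric series finite
  have hsum : (∑' n : ℕ, ENNReal.ofReal (M * sr^(n+1))) < ⊤ := by
    have heq : ∀ n : ℕ, ENNReal.ofReal (M * sr^(n+1))
        = ENNReal.ofReal (M*sr) * (ENNReal.ofReal sr)^n := by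
      intro n
      rw [← ENNReal.ofReal_pow hsr_pos.le, ← ENNReal.ofReal_mul (by positivity)]
      congr 1
      rw [pow_succ]
      ring
    rw [tsum_congr heq, ENNReal.tsum_mul_left, ENNReal.tsum_geometric]
    apply ENNReal.mul_lt_top ofReal_lt_top
    rw [ENNReal.inv_lt_top, tsub_pos_iff_lt]
    exact ENNReal.ofReal_lt_one.mpr hsr_lt1
  -- FINITENESS
  have hfin : sigmaNorm (volume.restrict (Set.Icc (0:ℝ) 1)) σ Y < ⊤ := by
    rw [sigmaNorm]
    calc (∫⁻ u in Set.Ioo (0:ℝ) 1, ENNReal.ofReal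
            (σ u * quantile (volume.restrict (Set.Icc 0 1)) (fun ω => |Y ω|) u))
        ≤ ∫⁻ u in Set.Ioo (0:ℝ) 1, ENNReal.ofReal (f u * g (Φ u)) := by
          apply setLIntegral_mono (hfmeas.mul hgΦmeas).ennreal_ofReal
          intro u hu
          apply ENNReal.ofReal_le_ofReal
          show _ ≤ f u * g (Φ u)
          rw [← hYu_eq u hu]
          exact mul_le_mul_of_nonneg_left (hquant u hu) (hσ0 u ⟨hu.1.le, hu.2.le⟩)
      _ ≤ ∫⁻ u in ⋃ n, Set.Ico (a n) (a (n+1)), ENNReal.ofReal (f u * g (Φ u)) :=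
          lintegral_mono_set hcover
      _ ≤ ∑' n, ∫⁻ u in Set.Ico (a n) (a (n+1)), ENNReal.ofReal (f u * g (Φ u)) :=
          lintegral_iUnion_le _ _
      _ ≤ ∑' n : ℕ, ENNReal.ofReal (M * sr^(n+1)) := ENNReal.tsum_le_tsum hblockT
      _ < ⊤ := hsum
  -- pointwise lower bound on blocks
  have hYp : ∀ n : ℕ, ∀ u ∈ Set.Ioo (a n) (a (n+1)),
      ENNReal.ofReal (((1/2:ℝ)^n)⁻¹) * ENNReal.ofReal (f u) ≤ ENNReal.ofReal (|Y u| ^ p) := by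
    intro n u hu
    have hu1 : u < 1 := lt_of_lt_of_le hu.2 (ha01 (n+1)).2
    have huIcc : u ∈ Set.Icc (0:ℝ) 1 := ⟨le_trans (ha01 n).1 hu.1.le, hu1.le⟩
    have hb_pos : 0 < 1 - Φ u / M := hbase_pos u hu1
    have hb_le : 1 - Φ u / M ≤ (1/2:ℝ)^n := by
      have h1 : Φ (a n) ≤ Φ u := hΦmono hu.1.le
      rw [haΦ n] at h1
      have h1' : M * (1 - (1/2:ℝ)^n) ≤ Φ u := h1
      have h2 : 1 - (1/2:ℝ)^n ≤ Φ u / M := (le_div_iff₀ hM0).mpr (by linarith)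
      linarith
    have hYeq : |Y u| ^ p = f u * (1 - Φ u / M)⁻¹ := by
      rw [abs_of_nonneg (hY_nonneg u hu1.le)]
      show (|σ u| ^ (q-1) * g (Φ u)) ^ p = f u * (1 - Φ u / M)⁻¹
      have hg0 : 0 ≤ g (Φ u) := inv_nonneg.mpr (Real.rpow_nonneg hb_pos.le _)
      rw [Real.mul_rpow (Real.rpow_nonneg (abs_nonneg _) _) hg0]
      congr 1
      · rw [← Real.rpow_mul (abs_nonneg _), hqp]
        rw [hfdef, Set.indicator_of_mem huIcc]
      · show ((((1 - Φ u / M) ^ (1/p:ℝ)))⁻¹) ^ p = (1 - Φ u / M)⁻¹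
        rw [← Real.rpow_neg_one ((1 - Φ u / M) ^ (1/p:ℝ)),
          ← Real.rpow_mul (Real.rpow_nonneg hb_pos.le _) (-1) p,
          ← Real.rpow_mul hb_pos.le, ← Real.rpow_neg_one (1 - Φ u / M)]
        congr 1
        field_simp
    rw [hYeq, ← ENNReal.ofReal_mul (by positivity)]
    apply ENNReal.ofReal_le_ofReal
    have h3 : ((1/2:ℝ)^n)⁻¹ ≤ (1 - Φ u / M)⁻¹ := inv_anti₀ hb_pos hb_le
    calc ((1/2:ℝ)^n)⁻¹ * f u ≤ (1 - Φ u / M)⁻¹ * f u :=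
          mul_le_mul_of_nonneg_right h3 (hf0 u)
      _ = f u * (1 - Φ u / M)⁻¹ := by ring
  -- measurability of |Y|^p
  have hYpmeas : Measurable fun u => ENNReal.ofReal (|Y u| ^ p) :=
    ((Real.continuous_rpow_const hp_pos.le).measurable.comp hYmeas.abs).ennreal_ofReal
  -- block lower bound
  have hblockD : ∀ n : ℕ, ENNReal.ofReal (M/2)
      ≤ ∫⁻ u in Set.Ioo (a n) (a (n+1)), ENNReal.ofReal (|Y u| ^ p) := by
    intro n
    have hd_nonneg : (0:ℝ) ≤ ((1/2:ℝ)^n)⁻¹ := by positivity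
    calc ENNReal.ofReal (M/2)
        = ENNReal.ofReal (((1/2:ℝ)^n)⁻¹) * ENNReal.ofReal (M * (1/2:ℝ)^(n+1)) := by
          rw [← ENNReal.ofReal_mul hd_nonneg]
          congr 1
          have hne : ((1/2:ℝ)^n) ≠ 0 := by positivity
          rw [pow_succ]
          field_simp
      _ = ENNReal.ofReal (((1/2:ℝ)^n)⁻¹)
            * ∫⁻ u in Set.Ioo (a n) (a (n+1)), ENNReal.ofReal (f u) := by
          rw [hblock _ _ (hamono n.le_succ), hΦa_diff n]
      _ = ∫⁻ u in Set.Ioo (a n) (a (n+1)),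
            ENNReal.ofReal (((1/2:ℝ)^n)⁻¹) * ENNReal.ofReal (f u) :=
          (lintegral_const_mul' _ _ ofReal_ne_top).symm
      _ ≤ ∫⁻ u in Set.Ioo (a n) (a (n+1)), ENNReal.ofReal (|Y u| ^ p) :=
          setLIntegral_mono hYpmeas (fun u hu => hYp n u hu)
  -- disjointness
  have hdisj : Pairwise (Function.onFun Disjoint fun n : ℕ => Set.Ioo (a n) (a (n+1))) := by
    intro n m hnm
    rcases lt_or_gt_of_ne hnm with h | h
    · apply Set.disjoint_left.mpr
      intro x hx1 hx2
      have : a (n+1) ≤ a m := hamono h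
      have := hx1.2
      have := hx2.1
      linarith
    · apply Set.disjoint_left.mpr
      intro x hx1 hx2
      have : a (m+1) ≤ a n := hamono h
      have := hx1.1
      have := hx2.2
      linarith
  -- DIVERGENCE
  have hdiv : (∫⁻ ω in Set.Icc (0:ℝ) 1, ENNReal.ofReal (|Y ω| ^ p)) = ⊤ := by
    rw [eq_top_iff]
    calc (⊤:ℝ≥0∞) = ∑' _ : ℕ, ENNReal.ofReal (M/2) := by
          rw [ENNReal.tsum_const_eq_top_of_ne_zero]
          intro h
          rw [ENNReal.ofReal_eq_zero] at h
          linarith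
      _ ≤ ∑' n : ℕ, ∫⁻ u in Set.Ioo (a n) (a (n+1)), ENNReal.ofReal (|Y u| ^ p) :=
          ENNReal.tsum_le_tsum hblockD
      _ = ∫⁻ u in ⋃ n : ℕ, Set.Ioo (a n) (a (n+1)), ENNReal.ofReal (|Y u| ^ p) :=
          (lintegral_iUnion (fun n => measurableSet_Ioo) hdisj _).symm
      _ ≤ ∫⁻ ω in Set.Icc (0:ℝ) 1, ENNReal.ofReal (|Y ω| ^ p) := by
          apply lintegral_mono_set
          apply Set.iUnion_subset
          intro n x hx
          exact ⟨le_trans (ha01 n).1 hx.1.le, le_trans hx.2.le (ha01 (n+1)).2⟩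
  exact ⟨Y, hYmeas, hfin, hdiv⟩
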